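/- Let O₀ denote the ring of germs at 0 ∈ ℂ of ℂ-valued functions analytic at 0, and let g ∈ O₀. Consider the O₀-linear map T_g on the polynomial ring O₀[X]. Then: (1) if g ≠ 0 in O₀, T_g is injective; (2) T_g is surjective if and only if g(0) ≠ 0, where g(0) denotes the value at 0 of (any representative of) the germ g. (This is the paper's Example for the operator P = x²∂_x + g(s), localized at a parameter point s₀ = 0: the induced system of M = D_{X×S/S}/D_{X×S/S}·P along Y×S, Y = {0}, has coherent—indeed vanishing—cohomology near s₀ exactly when g(s₀) ≠ 0, exhibiting the necessity of the exceptional discrete set S₀ = g^{-1}(0) in the paper's Proposition 2 on holonomicity of induced systems.) -/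

import Mathlib

open Filter Polynomial Topology

/-- The `R`-linear map `T_g : R[X] → R[X]`, `T_g(p) = g•p + X·p''`, describing the right
action of the relative differential operator `P = x²∂_x + g(s)` on
`B^{(r)}_{{0}×S/S} = D_{X×S/S}/xD_{X×S/S} ≅ O_S[δ(x)]`, with `X^j` corresponding to
`δ^j(x)`. Equivalently `T_g(Σ_j a_j X^j) = Σ_j (j(j+1)·a_{j+1} + g·a_j)·X^j`. -/
noncomputable def Tg {R : Type*} [CommRing R] (g : R) : R[X] →ₗ[R] R[X] :=
  g • LinearMap.id +
    (LinearMap.mulLeft R (X : R[X])) ∘ₗ (Polynomial.derivative ∘ₗ Polynomial.derivative)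

/-- `O₀`: the ring of germs at `0 ∈ ℂ` of `ℂ`-valued functions analytic at `0`, realized
as the subring of `Filter.Germ (𝓝 0) ℂ` of germs admitting a representative that is
analytic at `0`. -/
noncomputable def O₀ : Subring (Germ (𝓝 (0 : ℂ)) ℂ) where
  carrier := {φ | ∃ f : ℂ → ℂ, AnalyticAt ℂ f 0 ∧ φ = (f : Germ (𝓝 (0 : ℂ)) ℂ)}
  zero_mem' := ⟨fun _ => 0, analyticAt_const, rfl⟩
  one_mem' := ⟨fun _ => 1, analyticAt_const, rfl⟩
  add_mem' := by
    rintro a b ⟨f, hf, rfl⟩ ⟨k, hk, rfl⟩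
    exact ⟨fun z => f z + k z, hf.add hk, rfl⟩
  mul_mem' := by
    rintro a b ⟨f, hf, rfl⟩ ⟨k, hk, rfl⟩
    exact ⟨fun z => f z * k z, hf.mul hk, rfl⟩
  neg_mem' := by
    rintro a ⟨f, hf, rfl⟩
    exact ⟨fun z => -f z, hf.neg, rfl⟩

/-- The coefficient formula for `T_g`. -/
lemma coeff_Tg {R : Type*} [CommRing R] (g : R) (p : R[X]) (j : ℕ) :
    (Tg g p).coeff j = g * p.coeff j + (j : R) * ((j : R) + 1) * p.coeff (j + 1) := by
  cases j with
  | zero => simp [Tg, mul_coeff_zero]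
  | succ e =>
    simp only [Tg, LinearMap.add_apply, LinearMap.smul_apply, LinearMap.id_apply,
      LinearMap.coe_comp, Function.comp_apply, LinearMap.mulLeft_apply, coeff_add,
      coeff_smul, smul_eq_mul, coeff_X_mul, coeff_derivative]
    push_cast
    ring

/-- Degree-reduction surjectivity: over any commutative ring, if `g` is invertible then
`T_g` hits every polynomial of degree at most `n`. -/
lemma Tg_surj_aux {R : Type*} [CommRing R] (g u : R) (hu : g * u = 1) :
    ∀ n : ℕ, ∀ q : R[X], q.natDegree ≤ n → ∃ p, Tg g p = q := by
  intro n
  induction n with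
  | zero =>
    intro q hq
    refine ⟨C (u * q.coeff 0), ?_⟩
    rw [eq_C_of_natDegree_le_zero hq]
    ext j
    rw [coeff_Tg]
    cases j with
    | zero => simp [← mul_assoc, hu]
    | succ e => simp
  | succ n ih =>
    intro q hq
    set b := q.coeff (n + 1) with hb
    set p₀ : R[X] := C (u * b) * X ^ (n + 1) with hp₀
    have hcoeff : ∀ k, p₀.coeff k = if k = n + 1 then u * b else 0 := by
      intro k
      rw [hp₀, coeff_C_mul, coeff_X_pow]
      simp
    have hq' : (q - Tg g p₀).natDegree ≤ n := by
      rw [natDegree_le_iff_coeff_eq_zero]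
      intro m hm
      rw [coeff_sub, coeff_Tg, hcoeff, hcoeff]
      rcases eq_or_lt_of_le (Nat.succ_le_of_lt hm) with h | h
      · rw [← h]
        have h2 : n + 1 + 1 ≠ n + 1 := by omega
        simp [← hb, ← mul_assoc, hu, h2]
      · have h1 : m ≠ n + 1 := by omega
        have h2 : m + 1 ≠ n + 1 := by omega
        have h3 : q.coeff m = 0 := coeff_eq_zero_of_natDegree_lt (lt_of_le_of_lt hq h)
        simp [h1, h2, h3, show m ≠ n by omega]
    obtain ⟨p', hp'⟩ := ih _ hq'
    exact ⟨p' + p₀, by rw [map_add, hp', sub_add_cancel]⟩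

/-- `O₀` has no zero divisors, by the identity theorem for analytic functions. -/
instance : NoZeroDivisors O₀ where
  eq_zero_or_eq_zero_of_mul_eq_zero := by
    rintro ⟨a, f, hf, rfl⟩ ⟨b, k, hk, rfl⟩ hab
    have hab' : ((f : Germ (𝓝 (0:ℂ)) ℂ) * ↑k) = 0 := by
      have := Subtype.ext_iff.mp hab
      simpa using this
    have hmul : ∀ᶠ z in 𝓝 (0:ℂ), f z * k z = 0 := by
      have : ((fun z => f z * k z : ℂ → ℂ) : Germ (𝓝 (0:ℂ)) ℂ)
          = ((fun _ => (0:ℂ)) : ℂ → ℂ) := by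
        rw [← Germ.coe_mul] at hab'
        exact hab'
      exact Germ.coe_eq.mp this
    rcases hf.eventually_eq_zero_or_eventually_ne_zero with hf0 | hfne
    · left
      ext
      exact Germ.coe_eq.mpr hf0
    · right
      have hk0 : ∀ᶠ z in 𝓝[≠] (0:ℂ), k z = 0 := by
        filter_upwards [hfne, hmul.filter_mono nhdsWithin_le_nhds] with z h1 h2
        exact (mul_eq_zero.mp h2).resolve_left h1
      have hkc : Filter.Tendsto k (𝓝[≠] (0:ℂ)) (𝓝 (k 0)) :=
        hk.continuousAt.continuousWithinAt
      have hlim : Filter.Tendsto k (𝓝[≠] (0:ℂ)) (𝓝 (0:ℂ)) :=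
        Filter.Tendsto.congr' (Filter.EventuallyEq.symm hk0) tendsto_const_nhds
      have hk00 : k 0 = 0 := tendsto_nhds_unique hkc hlim
      have : ∀ᶠ z in 𝓝 (0:ℂ), k z = 0 := by
        rw [← nhdsNE_sup_pure 0, eventually_sup] at *
        exact ⟨hk0, by simp [hk00]⟩
      ext
      exact Germ.coe_eq.mpr this

/-- If the value of `g ∈ O₀` at `0` is nonzero then `g` is invertible in `O₀`. -/
lemma O₀.exists_inv (g : O₀) (hv : (g : Germ (𝓝 (0 : ℂ)) ℂ).value ≠ 0) :
    ∃ u : O₀, g * u = 1 := by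
  obtain ⟨gv, hmem⟩ := g
  obtain ⟨f, hf, rfl⟩ := hmem
  have hf0 : f 0 ≠ 0 := hv
  refine ⟨⟨(fun z => (f z)⁻¹ : ℂ → ℂ), ⟨_, hf.inv hf0, rfl⟩⟩, ?_⟩
  apply Subtype.ext
  show (f : Germ (𝓝 (0:ℂ)) ℂ) * ↑(fun z => (f z)⁻¹) = 1
  rw [← Germ.coe_mul]
  have : ∀ᶠ z in 𝓝 (0:ℂ), f z ≠ 0 := hf.continuousAt.eventually_ne hf0
  have he : (fun z => f z * (f z)⁻¹) =ᶠ[𝓝 (0:ℂ)] (fun _ => (1:ℂ)) := by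
    filter_upwards [this] with z hz
    exact mul_inv_cancel₀ hz
  exact Germ.coe_eq.mpr he

/-- The evaluation-at-`0` ring homomorphism `O₀ → ℂ`. -/
noncomputable def O₀.ev : O₀ →+* ℂ := Germ.valueRingHom.comp O₀.subtype

/-- For a germ `g ∈ O₀`: (1) if `g ≠ 0` then `T_g : O₀[X] → O₀[X]` is injective;
(2) `T_g` is surjective if and only if the value `g(0)` of the germ `g` at `0` is
nonzero. -/
theorem Tg_injective_and_surjective_iff (g : O₀) :
    (g ≠ 0 → Function.Injective (Tg g)) ∧
    (Function.Surjective (Tg g) ↔ (g : Germ (𝓝 (0 : ℂ)) ℂ).value ≠ 0) := by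
  constructor
  · intro hg
    rw [injective_iff_map_eq_zero]
    intro p hp
    by_contra hp0
    have h1 : (Tg g p).coeff p.natDegree = 0 := by rw [hp]; simp
    rw [coeff_Tg, coeff_natDegree_succ_eq_zero, mul_zero, add_zero] at h1
    exact mul_ne_zero hg (leadingCoeff_ne_zero.mpr hp0) h1
  · constructor
    · intro hsurj
      obtain ⟨p, hp⟩ := hsurj 1
      have h1 : (Tg g p).coeff 0 = 1 := by rw [hp]; simp
      rw [coeff_Tg] at h1
      simp only [Nat.cast_zero, zero_mul, zero_add, add_zero, zero_mul] at h1
      have h1' : g * p.coeff 0 = 1 := by simpa using h1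
      intro hv
      have := congrArg O₀.ev h1'
      rw [map_mul, map_one] at this
      have hgv : O₀.ev g = 0 := hv
      rw [hgv, zero_mul] at this
      exact zero_ne_one this
    · intro hv
      obtain ⟨u, hu⟩ := O₀.exists_inv g hv
      intro q
      exact Tg_surj_aux g u hu q.natDegree q le_rfl
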